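/- Let CM(R,S,𝔯) be a Cayley map on a finite group R and suppose γ generates the stabilizer Aut(CM(R,S,𝔯))_e of the identity vertex. Then γ(S) = S, the restriction γ|_S of γ to S is a power of the cyclic ordering 𝔯, and γ|_S has the same order as γ. -/

import Mathlib

/-- `S` is a Cayley connection set on `R`: it avoids the identity, is inverse-closed,
and generates `R`. -/
def IsCayleyGenSet {R : Type*} [Group R] (S : Finset R) : Prop :=
  (1 : R) ∉ S ∧ (∀ s ∈ S, s⁻¹ ∈ S) ∧ Subgroup.closure (S : Set R) = ⊤

/-- `r` is a cyclic ordering of `S` (extended by the identity outside `S`):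
a permutation acting as a single cycle of length `|S|` on `S`, with no fixed
points in `S`, fixing everything outside `S`. -/
def IsCyclicOrderingOn {R : Type*} [Group R] (S : Finset R) (r : Equiv.Perm R) : Prop :=
  r.IsCycleOn (S : Set R) ∧ (∀ x ∈ S, r x ≠ x) ∧ (∀ x ∉ S, r x = x)

/-- The pair `(S, r)` is a labelled Cayley map on `R`. -/
def IsCayleyMap {R : Type*} [Group R] (S : Finset R) (r : Equiv.Perm R) : Prop :=
  IsCayleyGenSet S ∧ IsCyclicOrderingOn S r

/-- `φ` is an automorphism of the Cayley map `CM(R,S,r)`: a graph automorphism of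
`Cay(R,S)` (edges `x ~ y` iff `x * y⁻¹ ∈ S`, so the neighbourhood of `g` is `S * g`)
commuting with the rotations `ρ_g(x) = r (x * g⁻¹) * g`, i.e.
`φ ∘ ρ_g = ρ_{φ g} ∘ φ` on the neighbourhood of each vertex `g`. -/
def IsCayleyMapAut {R : Type*} [Group R] (S : Finset R) (r : Equiv.Perm R)
    (φ : Equiv.Perm R) : Prop :=
  (∀ x y : R, x * y⁻¹ ∈ S ↔ φ x * (φ y)⁻¹ ∈ S) ∧
  (∀ g x : R, x * g⁻¹ ∈ S → φ (r (x * g⁻¹) * g) = r (φ x * (φ g)⁻¹) * φ g)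

/-- The Cayley map `CM(R,S,r)` is a mapical regular representation: its automorphisms
are exactly the right translations `x ↦ x * g`. -/
def IsMRR {R : Type*} [Group R] (S : Finset R) (r : Equiv.Perm R) : Prop :=
  ∀ φ : Equiv.Perm R, IsCayleyMapAut S r φ ↔ ∃ g : R, ∀ x : R, φ x = x * g

/-- If `γ` generates the stabilizer of the identity vertex in the automorphism group
of a Cayley map `CM(R,S,𝔯)`, then `γ(S) = S`, the restriction of `γ` to `S` is a
power of `𝔯`, and the restriction of `γ` to `S` has the same order as `γ`. -/
theorem generator_of_stabilizer_props {R : Type*} [Group R] [Fintype R]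
    (S : Finset R) (𝔯 : Equiv.Perm R) (h : IsCayleyMap S 𝔯) (γ : Equiv.Perm R)
    (hgen : {φ : Equiv.Perm R | IsCayleyMapAut S 𝔯 φ ∧ φ 1 = 1} =
      {φ : Equiv.Perm R | ∃ k : ℕ, φ = γ ^ k}) :
    ∃ hS : ∀ x : R, x ∈ S ↔ γ x ∈ S,
      (∃ k : ℕ, ∀ x ∈ S, γ x = (𝔯 ^ k) x) ∧
      orderOf (γ.subtypePerm (fun x => (hS x).symm)) = orderOf γ := by

  obtain ⟨⟨h1S, hinv, hclos⟩, hcyc, hnofix, hfixout⟩ := h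
  -- γ itself is an automorphism fixing 1
  have hγmem : IsCayleyMapAut S 𝔯 γ ∧ γ 1 = 1 := by
    have hx : γ ∈ {φ : Equiv.Perm R | ∃ k : ℕ, φ = γ ^ k} := ⟨1, (pow_one γ).symm⟩
    rw [← hgen] at hx; exact hx
  obtain ⟨⟨hedge, hrot⟩, hγ1⟩ := hγmem
  have hS : ∀ x : R, x ∈ S ↔ γ x ∈ S := by
    intro x; simpa [hγ1] using hedge x 1
  -- 𝔯 maps S into S, and its powers too
  have hmap : ∀ s ∈ S, 𝔯 s ∈ S := fun s hs => hcyc.1.mapsTo hs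
  have hmappow : ∀ (m : ℕ), ∀ s ∈ S, (𝔯 ^ m) s ∈ S := by
    intro m; induction m with
    | zero => intro s hs; simpa using hs
    | succ n ih => intro s hs
                   have := hmap _ (ih s hs)
                   simpa [pow_succ', Equiv.Perm.mul_apply] using this
  -- γ commutes with 𝔯 on S
  have hcomm : ∀ s ∈ S, γ (𝔯 s) = 𝔯 (γ s) := by
    intro s hs
    have := hrot 1 s (by simpa using hs)
    simpa [hγ1] using this
  have hcommpow : ∀ (m : ℕ), ∀ s ∈ S, γ ((𝔯 ^ m) s) = (𝔯 ^ m) (γ s) := by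
    intro m; induction m with
    | zero => intro s hs; simp
    | succ n ih =>
        intro s hs
        have h1 : (𝔯 ^ n) s ∈ S := hmappow n s hs
        have h2 : γ (𝔯 ((𝔯 ^ n) s)) = 𝔯 (γ ((𝔯 ^ n) s)) := hcomm _ h1
        simp only [pow_succ', Equiv.Perm.mul_apply] at *
        rw [h2, ih s hs]
  -- rigidity: an automorphism fixing 1 and S pointwise is the identity
  have rigid : ∀ φ : Equiv.Perm R, IsCayleyMapAut S 𝔯 φ → φ 1 = 1 →
      (∀ s ∈ S, φ s = s) → φ = 1 := by
    rintro φ ⟨hedgeφ, hrotφ⟩ hφ1 hφS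
    have stepA : ∀ g : R, φ g = g → ∀ t ∈ S, φ (t * g) = t * g →
        φ (𝔯 t * g) = 𝔯 t * g := by
      intro g hg t ht hfix
      have := hrotφ g (t * g) (by simpa using ht)
      simpa [hg, hfix, mul_inv_cancel_right] using this
    have claimA : ∀ g : R, φ g = g → ∀ t ∈ S, φ (t * g) = t * g →
        ∀ s ∈ S, φ (s * g) = s * g := by
      intro g hg t ht hfix s hs
      have key : ∀ m : ℕ, φ ((𝔯 ^ m) t * g) = (𝔯 ^ m) t * g := by
        intro m; induction m with
        | zero => simpa using hfix
        | succ n ih =>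
            have h1 : (𝔯 ^ n) t ∈ S := hmappow n t ht
            have := stepA g hg _ h1 ih
            simpa [pow_succ', Equiv.Perm.mul_apply] using this
      obtain ⟨m, -, hm⟩ := hcyc.exists_pow_eq ht hs
      rw [← hm]; exact key m
    -- main induction over the monoid generated by S
    have hsymm : (S : Set R) ∪ (S : Set R)⁻¹ = (S : Set R) := by
      apply Set.union_eq_self_of_subset_right
      intro x hx
      have : x⁻¹ ∈ S := hx
      simpa using hinv _ this
    have hmono : ∀ x : R, x ∈ Submonoid.closure (S : Set R) := by
      intro x
      have h1 : x ∈ Subgroup.closure (S : Set R) := by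
        rw [hclos]; exact Subgroup.mem_top x
      have h2 : x ∈ (Subgroup.closure (S : Set R)).toSubmonoid := h1
      rwa [Subgroup.closure_toSubmonoid, hsymm] at h2
    have main : ∀ x : R, x ∈ Submonoid.closure (S : Set R) →
        ∀ g : R, φ g = g → (∀ s ∈ S, φ (s * g) = s * g) →
        (φ (x * g) = x * g ∧ ∀ s ∈ S, φ (s * (x * g)) = s * (x * g)) := by
      intro x hx
      induction hx using Submonoid.closure_induction with
      | one => intro g hg hng; simpa using ⟨hg, hng⟩
      | mem y hy =>
          intro g hg hng
          have hyS : y ∈ S := hy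
          have hfix1 : φ (y * g) = y * g := hng y hyS
          refine ⟨hfix1, ?_⟩
          have hyinv : y⁻¹ ∈ S := hinv _ hyS
          have hwit : φ (y⁻¹ * (y * g)) = y⁻¹ * (y * g) := by
            simpa [inv_mul_cancel_left] using hg
          exact claimA (y * g) hfix1 y⁻¹ hyinv hwit
      | mul a b ha hb iha ihb =>
          intro g hg hng
          obtain ⟨hb1, hb2⟩ := ihb g hg hng
          obtain ⟨ha1, ha2⟩ := iha (b * g) hb1 hb2
          constructor
          · simpa [mul_assoc] using ha1
          · intro s hs
            have := ha2 s hs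
            simpa [mul_assoc] using this
    ext x
    have := (main x (hmono x) 1 hφ1 (fun s hs => by simpa using hφS s hs)).1
    simpa using this
  refine ⟨hS, ?_, ?_⟩
  · -- γ restricted to S is a power of 𝔯
    by_cases hne : S.Nonempty
    · obtain ⟨s₀, hs₀⟩ := hne
      obtain ⟨k, -, hk⟩ := hcyc.exists_pow_eq hs₀ ((hS s₀).1 hs₀)
      refine ⟨k, fun x hx => ?_⟩
      obtain ⟨m, -, hm⟩ := hcyc.exists_pow_eq hs₀ hx
      calc γ x = γ ((𝔯 ^ m) s₀) := by rw [hm]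
        _ = (𝔯 ^ m) (γ s₀) := hcommpow m s₀ hs₀
        _ = (𝔯 ^ m) ((𝔯 ^ k) s₀) := by rw [hk]
        _ = (𝔯 ^ k) ((𝔯 ^ m) s₀) := by
              rw [← Equiv.Perm.mul_apply, ← Equiv.Perm.mul_apply, ← pow_add, ← pow_add,
                add_comm]
        _ = (𝔯 ^ k) x := by rw [hm]
    · exact ⟨0, fun x hx => absurd ⟨x, hx⟩ hne⟩
  · -- orders coincide
    rw [orderOf_eq_orderOf_iff]
    intro n
    rw [Equiv.Perm.subtypePerm_pow]
    constructor
    · intro hn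
      have hfixS : ∀ s ∈ S, (γ ^ n) s = s := by
        intro s hs
        have := Equiv.Perm.ext_iff.1 hn ⟨s, hs⟩
        simpa [Equiv.Perm.subtypePerm_apply, Subtype.ext_iff] using this
      have hmem : IsCayleyMapAut S 𝔯 (γ ^ n) ∧ (γ ^ n) 1 = 1 := by
        have hx : γ ^ n ∈ {φ : Equiv.Perm R | ∃ k : ℕ, φ = γ ^ k} := ⟨n, rfl⟩
        rw [← hgen] at hx; exact hx
      exact rigid (γ ^ n) hmem.1 hmem.2 hfixS
    · intro hn
      ext ⟨x, hx⟩
      simp [hn, Equiv.Perm.subtypePerm_apply]
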